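/- Stationarity of the Lagrangian L(q) = Σ_k (λ_k+1)·(a_k/ln 2)·B·(q_k − ln(σ² + Σ_{u≠k} g_{ku} e^{q_u})) − (η+φ)·Σ_k e^{q_k} + const with respect to q_i yields, at any stationary point, e^{q_i} = (λ_i+1)·(B·a_i/ln 2) / ( (B/ln 2)·Σ_{k≠i} (λ_k+1)·a_k·g_{ki}/I_k + (η+φ) ), where I_k = σ² + Σ_{u≠k} g_{ku}·e^{q_u}. -/

import Mathlib

open Finset in
/-- KKT stationarity of the Lagrangian in log-power variables yields the
closed-form power allocation. -/
theorem kkt_stationary_power {K : ℕ} (i : Fin K)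
    (B η φ σ2 C : ℝ) (a lam : Fin K → ℝ) (g : Fin K → Fin K → ℝ)
    (hB : 0 < B) (hσ : 0 < σ2) (hη : 0 ≤ η) (hφ : 0 ≤ φ) (hηφ : 0 < η + φ)
    (ha : ∀ k, 0 < a k) (hlam : ∀ k, 0 ≤ lam k) (hg : ∀ k u, 0 ≤ g k u)
    (q : Fin K → ℝ)
    (L : (Fin K → ℝ) → ℝ)
    (hL : ∀ x : Fin K → ℝ, L x =
      (∑ k, (lam k + 1) * (a k / Real.log 2) * B *
          (x k - Real.log (σ2 + ∑ u ∈ univ.erase k, g k u * Real.exp (x u))))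
        - (η + φ) * ∑ k, Real.exp (x k) + C)
    (hstat : ∀ j : Fin K, HasDerivAt (fun t : ℝ => L (Function.update q j t)) 0 (q j)) :
    Real.exp (q i) =
      (lam i + 1) * (B * a i / Real.log 2) /
        ((B / Real.log 2) * ∑ k ∈ univ.erase i,
            (lam k + 1) * a k * g k i /
              (σ2 + ∑ u ∈ univ.erase k, g k u * Real.exp (q u))
          + (η + φ)) := by
  classical
  have hlog2 : 0 < Real.log 2 := Real.log_pos (by norm_num)
  set I : Fin K → ℝ := fun k => σ2 + ∑ u ∈ univ.erase k, g k u * Real.exp (q u) with hIdef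
  have hIpos : ∀ k, 0 < I k := by
    intro k
    have h0 : 0 ≤ ∑ u ∈ univ.erase k, g k u * Real.exp (q u) :=
      Finset.sum_nonneg fun u _ => mul_nonneg (hg k u) (Real.exp_pos _).le
    have : 0 < σ2 + ∑ u ∈ univ.erase k, g k u * Real.exp (q u) := by linarith
    simpa [hIdef] using this
  -- derivative of the inner interference sum
  have hsum : ∀ k : Fin K, HasDerivAt
      (fun t => σ2 + ∑ u ∈ univ.erase k, g k u * Real.exp (Function.update q i t u))
      (if i ∈ univ.erase k then g k i * Real.exp (q i) else 0) (q i) := by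
    intro k
    have h1 : HasDerivAt
        (fun t : ℝ => ∑ u ∈ univ.erase k, g k u * Real.exp (Function.update q i t u))
        (∑ u ∈ univ.erase k, if u = i then g k i * Real.exp (q i) else 0) (q i) := by
      apply HasDerivAt.fun_sum
      intro u hu
      by_cases hui : u = i
      · subst hui
        simp only [Function.update_self, if_pos rfl]
        exact (Real.hasDerivAt_exp (q u)).const_mul (g k u)
      · have he : (fun t : ℝ => g k u * Real.exp (Function.update q i t u))
            = fun _ => g k u * Real.exp (q u) := by
          funext t; rw [Function.update_of_ne hui]
        rw [he, if_neg hui]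
        exact hasDerivAt_const _ _
    have h2 := h1.const_add σ2
    rwa [Finset.sum_ite_eq' (univ.erase k) i (fun _ => g k i * Real.exp (q i))] at h2
  -- per-k term derivative
  have hterm : ∀ k : Fin K, HasDerivAt
      (fun t => (lam k + 1) * (a k / Real.log 2) * B *
        (Function.update q i t k -
          Real.log (σ2 + ∑ u ∈ univ.erase k, g k u * Real.exp (Function.update q i t u))))
      ((lam k + 1) * (a k / Real.log 2) * B *
        ((if k = i then (1:ℝ) else 0) -
          (if i ∈ univ.erase k then g k i * Real.exp (q i) else 0) / I k)) (q i) := by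
    intro k
    have hfirst : HasDerivAt (fun t => Function.update q i t k)
        (if k = i then (1:ℝ) else 0) (q i) := by
      by_cases hk : k = i
      · subst hk
        simp only [Function.update_self, if_pos rfl]
        exact hasDerivAt_id (q k)
      · have he : (fun t : ℝ => Function.update q i t k) = fun _ => q k := by
          funext t; rw [Function.update_of_ne hk]
        rw [he, if_neg hk]
        exact hasDerivAt_const _ _
    have hval : σ2 + ∑ u ∈ univ.erase k, g k u * Real.exp (Function.update q i (q i) u) = I k := by
      rw [Function.update_eq_self]
    have hlog : HasDerivAt
        (fun t => Real.log (σ2 + ∑ u ∈ univ.erase k, g k u * Real.exp (Function.update q i t u)))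
        ((if i ∈ univ.erase k then g k i * Real.exp (q i) else 0) / I k) (q i) := by
      have := (hsum k).log (by rw [hval]; exact (hIpos k).ne')
      rwa [hval] at this
    exact (hfirst.sub hlog).const_mul _
  -- derivative of the exp sum
  have hexp : HasDerivAt (fun t => ∑ k, Real.exp (Function.update q i t k))
      (Real.exp (q i)) (q i) := by
    have h1 : HasDerivAt (fun t => ∑ k, Real.exp (Function.update q i t k))
        (∑ k : Fin K, if k = i then Real.exp (q i) else 0) (q i) := by
      apply HasDerivAt.fun_sum
      intro k _
      by_cases hk : k = i
      · subst hk
        simp only [Function.update_self, if_pos rfl]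
        exact Real.hasDerivAt_exp (q k)
      · have he : (fun t : ℝ => Real.exp (Function.update q i t k)) = fun _ => Real.exp (q k) := by
          funext t; rw [Function.update_of_ne hk]
        rw [he, if_neg hk]
        exact hasDerivAt_const _ _
    simpa using h1
  -- total derivative
  set D : ℝ := (∑ k, (lam k + 1) * (a k / Real.log 2) * B *
        ((if k = i then (1:ℝ) else 0) -
          (if i ∈ univ.erase k then g k i * Real.exp (q i) else 0) / I k))
      - (η + φ) * Real.exp (q i) with hDdef
  have hf : HasDerivAt (fun t => L (Function.update q i t)) D (q i) := by
    have hfun : (fun t : ℝ => L (Function.update q i t)) =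
        (fun t : ℝ => (∑ k, (lam k + 1) * (a k / Real.log 2) * B *
          (Function.update q i t k -
            Real.log (σ2 + ∑ u ∈ univ.erase k, g k u * Real.exp (Function.update q i t u))))
          - (η + φ) * ∑ k, Real.exp (Function.update q i t k) + C) :=
      funext fun t => hL _
    rw [hfun]
    exact ((HasDerivAt.fun_sum fun k _ => hterm k).sub (hexp.const_mul (η + φ))).add_const C
  have hD0 : D = 0 := hf.unique (hstat i)
  -- split the sum
  have hsplit : ∑ k, (lam k + 1) * (a k / Real.log 2) * B *
        ((if k = i then (1:ℝ) else 0) -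
          (if i ∈ univ.erase k then g k i * Real.exp (q i) else 0) / I k)
      = (lam i + 1) * (a i / Real.log 2) * B
        - ∑ k ∈ univ.erase i,
            (lam k + 1) * (a k / Real.log 2) * B * (g k i * Real.exp (q i) / I k) := by
    rw [← Finset.sum_erase_add univ _ (mem_univ i)]
    have h1 : ∀ k ∈ univ.erase i,
        (lam k + 1) * (a k / Real.log 2) * B *
          ((if k = i then (1:ℝ) else 0) -
            (if i ∈ univ.erase k then g k i * Real.exp (q i) else 0) / I k)
        = -((lam k + 1) * (a k / Real.log 2) * B * (g k i * Real.exp (q i) / I k)) := by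
      intro k hk
      have hki : k ≠ i := (Finset.mem_erase.mp hk).1
      have hik : i ∈ univ.erase k := Finset.mem_erase.mpr ⟨fun h => hki h.symm, mem_univ i⟩
      rw [if_neg hki, if_pos hik]
      ring
    rw [Finset.sum_congr rfl h1, Finset.sum_neg_distrib]
    have h2 : (lam i + 1) * (a i / Real.log 2) * B *
        ((if i = i then (1:ℝ) else 0) -
          (if i ∈ univ.erase i then g i i * Real.exp (q i) else 0) / I i)
        = (lam i + 1) * (a i / Real.log 2) * B := by
      rw [if_pos rfl, if_neg (Finset.notMem_erase i univ)]
      ring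
    rw [h2]; ring
  -- positivity of denominator
  have hden : 0 < (B / Real.log 2) * ∑ k ∈ univ.erase i,
      (lam k + 1) * a k * g k i / I k + (η + φ) := by
    have h1 : 0 ≤ ∑ k ∈ univ.erase i, (lam k + 1) * a k * g k i / I k :=
      Finset.sum_nonneg fun k _ => div_nonneg
        (mul_nonneg (mul_nonneg (by linarith [hlam k]) (ha k).le) (hg k i)) (hIpos k).le
    have h2 : 0 ≤ B / Real.log 2 := div_nonneg hB.le hlog2.le
    nlinarith
  -- rewrite the sums of the equation
  have hsum_eq : ∑ k ∈ univ.erase i,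
        (lam k + 1) * (a k / Real.log 2) * B * (g k i * Real.exp (q i) / I k)
      = Real.exp (q i) * ((B / Real.log 2) * ∑ k ∈ univ.erase i,
          (lam k + 1) * a k * g k i / I k) := by
    rw [Finset.mul_sum, Finset.mul_sum]
    exact Finset.sum_congr rfl fun k _ => by ring
  have key : (lam i + 1) * (a i / Real.log 2) * B
      = Real.exp (q i) * ((B / Real.log 2) * ∑ k ∈ univ.erase i,
          (lam k + 1) * a k * g k i / I k + (η + φ)) := by
    have hE := hD0
    rw [hDdef, hsplit, hsum_eq] at hE
    ring_nf at hE ⊢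
    linarith
  rw [eq_div_iff hden.ne']
  rw [← key]
  ring
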